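/- Assume ∑_{n ≤ u} Λ(n) = u + O(u^{1/2}·log² u) for u ≥ 2 (von Koch's RH bound). Let t > t' ≥ 10, Δ' := t - t', and e ≤ κ ≤ t/e. Then ∑_{b ≤ κ} ∑_{t'/b < a ≤ t/b, a > t/κ} Λ(a) = O(Δ'·log κ + (tκ)^{1/2}·log² t), with an absolute implied constant. -/

import Mathlib

open ArithmeticFunction

lemma icc_one_eq_ioc (n : ℕ) : Finset.Icc 1 n = Finset.Ioc 0 n := by
  rw [← Finset.Icc_add_one_left_eq_Ioc]; rfl

lemma sum_inv_sqrt_le (n : ℕ) :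
    ∑ b ∈ Finset.Icc 1 n, (Real.sqrt b)⁻¹ ≤ 2 * Real.sqrt n := by
  rw [icc_one_eq_ioc]
  induction n with
  | zero => simp
  | succ n ih =>
    rw [Finset.sum_Ioc_succ_top (Nat.zero_le n)]
    have h1 : (0:ℝ) < Real.sqrt ((n:ℝ)+1) := Real.sqrt_pos.mpr (by positivity)
    have h2 : Real.sqrt n * Real.sqrt ((n:ℝ)+1) ≤ n + 1/2 := by
      rw [← Real.sqrt_mul (by positivity)]
      have : Real.sqrt ((n:ℝ) * (n+1)) ≤ Real.sqrt (((n:ℝ)+1/2)^2) := by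
        apply Real.sqrt_le_sqrt; nlinarith
      rwa [Real.sqrt_sq (by positivity)] at this
    have h3 : Real.sqrt ((n:ℝ)+1) ^ 2 = (n:ℝ)+1 := Real.sq_sqrt (by positivity)
    have h4 : (Real.sqrt ((n:ℝ)+1))⁻¹ ≤ 2 * Real.sqrt ((n:ℝ)+1) - 2 * Real.sqrt n := by
      rw [inv_le_iff_one_le_mul₀ h1]
      nlinarith
    push_cast at *
    linarith [ih]

lemma sum_inv_le (n : ℕ) (y : ℝ) (hy : 1 ≤ y) (hn : (n:ℝ) ≤ y) :
    ∑ b ∈ Finset.Icc 1 n, ((b:ℝ))⁻¹ ≤ 1 + Real.log y := by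
  have h1 : ∑ b ∈ Finset.Icc 1 n, ((b:ℝ))⁻¹ = ((harmonic n : ℚ) : ℝ) := by
    rw [harmonic_eq_sum_Icc]; push_cast; ring
  rw [h1]
  calc ((harmonic n : ℚ) : ℝ) ≤ 1 + Real.log n := harmonic_le_one_add_log n
    _ ≤ 1 + Real.log y := by
        by_cases h : n = 0
        · simp only [h, Nat.cast_zero, Real.log_zero]
          linarith [Real.log_nonneg hy]
        · have h0 : (0:ℝ) < n := by exact_mod_cast Nat.pos_of_ne_zero h
          gcongr

lemma icc_one_eq_ioc' (n : ℕ) : Finset.Icc 1 n = Finset.Ioc 0 n := by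
  rw [← Finset.Icc_add_one_left_eq_Ioc]; rfl

lemma inner_bound (K₀ t t' κ : ℝ) (hK : 1 ≤ K₀)
    (hyp : ∀ u : ℝ, 2 ≤ u →
      |(∑ n ∈ Finset.Icc 1 ⌊u⌋₊, Λ n) - u| ≤ K₀ * Real.sqrt u * (Real.log u) ^ 2)
    (ht' : 10 ≤ t') (htt : t' < t) (hκ : Real.exp 1 ≤ κ) (hκt : κ ≤ t / Real.exp 1)
    (b : ℕ) (hb1 : 1 ≤ b) (hbκ : (b:ℝ) ≤ κ) :
    |∑ a ∈ Finset.Icc 1 ⌊t / (b:ℝ)⌋₊,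
        (if t' / (b:ℝ) < (a:ℝ) ∧ t / κ < (a:ℝ) then Λ a else 0)|
      ≤ (t - t') / b + 2 * K₀ * (Real.sqrt t / Real.sqrt b) * (Real.log t) ^ 2 := by
  have hb0 : (0:ℝ) < b := by exact_mod_cast hb1
  have he2 : (2:ℝ) ≤ Real.exp 1 := by
    have := Real.add_one_le_exp 1; linarith
  have ht0 : (0:ℝ) < t := by linarith
  have hκ0 : (0:ℝ) < κ := by linarith
  set m : ℝ := max (t' / b) (t / κ) with hm_def
  have htκ : Real.exp 1 ≤ t / κ := by
    rw [le_div_iff₀ hκ0]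
    calc Real.exp 1 * κ = κ * Real.exp 1 := by ring
      _ ≤ t := by
          rw [← le_div_iff₀ (Real.exp_pos 1)]; exact hκt
  have hm2 : (2:ℝ) ≤ m := le_trans (le_trans he2 htκ) (le_max_right _ _)
  have hmtb : m ≤ t / b := by
    apply max_le
    · gcongr
    · exact div_le_div_of_nonneg_left ht0.le hb0 hbκ
  have htb2 : (2:ℝ) ≤ t / b := le_trans hm2 hmtb
  set N := ⌊t / (b:ℝ)⌋₊ with hN
  set M := ⌊m⌋₊ with hM
  have hMN : M ≤ N := Nat.floor_le_floor hmtb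
  -- identity
  have key : (∑ a ∈ Finset.Icc 1 N, if t' / (b:ℝ) < (a:ℝ) ∧ t / κ < (a:ℝ) then (Λ a : ℝ) else 0)
      = (∑ a ∈ Finset.Icc 1 N, (Λ a : ℝ)) - (∑ a ∈ Finset.Icc 1 M, (Λ a : ℝ)) := by
    have hcond : ∀ a : ℕ, (t' / (b:ℝ) < (a:ℝ) ∧ t / κ < (a:ℝ)) ↔ M < a := by
      intro a
      rw [hM, Nat.floor_lt (by linarith : (0:ℝ) ≤ m), hm_def, max_lt_iff]
    simp_rw [hcond]
    rw [Finset.sum_ite, Finset.sum_const_zero, add_zero]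
    have hfil : (Finset.Icc 1 N).filter (fun a => M < a) = Finset.Ioc M N := by
      ext a
      simp only [Finset.mem_filter, Finset.mem_Icc, Finset.mem_Ioc]
      omega
    rw [hfil, icc_one_eq_ioc', icc_one_eq_ioc',
      ← Finset.sum_Ioc_consecutive (fun a => (Λ a : ℝ)) (Nat.zero_le M) hMN]
    ring
  rw [key]
  have h1 := hyp (t / b) htb2
  have h2 := hyp m hm2
  rw [← hN] at h1
  rw [← hM] at h2
  -- bound pieces
  have hmain : t / b - m ≤ (t - t') / b := by
    have : t' / b ≤ m := le_max_left _ _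
    have : t / b - m ≤ t / b - t' / b := by linarith
    calc t / b - m ≤ t / b - t' / b := this
      _ = (t - t') / b := by ring
  have hlogtb : Real.log (t / b) ≤ Real.log t := by
    apply Real.log_le_log (by linarith)
    calc t / b ≤ t / 1 := by
          apply div_le_div_of_nonneg_left ht0.le (by norm_num)
          exact_mod_cast hb1
      _ = t := by ring
  have hlogtb0 : 0 ≤ Real.log (t / b) := Real.log_nonneg (by linarith)
  have hlogm : Real.log m ≤ Real.log t := by
    apply Real.log_le_log (by linarith)
    calc m ≤ t / b := hmtb
      _ ≤ t / 1 := by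
          apply div_le_div_of_nonneg_left ht0.le (by norm_num)
          exact_mod_cast hb1
      _ = t := by ring
  have hlogm0 : 0 ≤ Real.log m := Real.log_nonneg (by linarith)
  have hsq : Real.sqrt (t / b) = Real.sqrt t / Real.sqrt b := Real.sqrt_div ht0.le b
  have hsqm : Real.sqrt m ≤ Real.sqrt (t / b) := Real.sqrt_le_sqrt hmtb
  have e1 : K₀ * Real.sqrt (t / b) * Real.log (t / b) ^ 2
      ≤ K₀ * (Real.sqrt t / Real.sqrt b) * Real.log t ^ 2 := by
    rw [← hsq]; gcongr <;> linarith
  have e2 : K₀ * Real.sqrt m * Real.log m ^ 2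
      ≤ K₀ * (Real.sqrt t / Real.sqrt b) * Real.log t ^ 2 := by
    rw [← hsq]; gcongr <;> linarith
  have t1 : |(∑ a ∈ Finset.Icc 1 N, (Λ a : ℝ)) - (∑ a ∈ Finset.Icc 1 M, (Λ a : ℝ))|
      ≤ |(∑ a ∈ Finset.Icc 1 N, (Λ a : ℝ)) - m| + |m - (∑ a ∈ Finset.Icc 1 M, (Λ a : ℝ))| :=
    abs_sub_le _ _ _
  have t2 : |(∑ a ∈ Finset.Icc 1 N, (Λ a : ℝ)) - m|
      ≤ |(∑ a ∈ Finset.Icc 1 N, (Λ a : ℝ)) - t / b| + |t / b - m| := abs_sub_le _ _ _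
  have t3 : |t / (b:ℝ) - m| = t / b - m := abs_of_nonneg (by linarith)
  have t4 : |m - (∑ a ∈ Finset.Icc 1 M, (Λ a : ℝ))|
      = |(∑ a ∈ Finset.Icc 1 M, (Λ a : ℝ)) - m| := abs_sub_comm _ _
  rw [t3] at t2
  rw [t4] at t1
  linarith


theorem large_a_sum_bound (K : ℝ)
    (hyp : ∀ u : ℝ, 2 ≤ u →
      |(∑ n ∈ Finset.Icc 1 ⌊u⌋₊, Λ n) - u| ≤ K * Real.sqrt u * (Real.log u) ^ 2) :
    ∃ K' > (0 : ℝ), ∀ t t' κ : ℝ, 10 ≤ t' → t' < t →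
      Real.exp 1 ≤ κ → κ ≤ t / Real.exp 1 →
      |∑ b ∈ Finset.Icc 1 ⌊κ⌋₊, ∑ a ∈ Finset.Icc 1 ⌊t / (b : ℝ)⌋₊,
          (if t' / (b : ℝ) < (a : ℝ) ∧ t / κ < (a : ℝ) then Λ a else 0)|
        ≤ K' * ((t - t') * Real.log κ + Real.sqrt (t * κ) * (Real.log t) ^ 2) := by
  set K₀ : ℝ := max K 1 with hK₀def
  have hK₀ : 1 ≤ K₀ := le_max_right K 1
  have hyp' : ∀ u : ℝ, 2 ≤ u →
      |(∑ n ∈ Finset.Icc 1 ⌊u⌋₊, Λ n) - u| ≤ K₀ * Real.sqrt u * (Real.log u) ^ 2 := by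
    intro u hu
    refine (hyp u hu).trans ?_
    have h1 : 0 ≤ Real.sqrt u * (Real.log u) ^ 2 := by positivity
    have h2 : K ≤ K₀ := le_max_left K 1
    calc K * Real.sqrt u * (Real.log u) ^ 2 = K * (Real.sqrt u * (Real.log u) ^ 2) := by ring
      _ ≤ K₀ * (Real.sqrt u * (Real.log u) ^ 2) := mul_le_mul_of_nonneg_right h2 h1
      _ = K₀ * Real.sqrt u * (Real.log u) ^ 2 := by ring
  refine ⟨4 * K₀, by positivity, ?_⟩
  intro t t' κ ht' htt hκ hκt
  have he2 : (2:ℝ) ≤ Real.exp 1 := by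
    have := Real.add_one_le_exp 1; linarith
  have ht0 : (0:ℝ) < t := by linarith
  have hκ1 : (1:ℝ) ≤ κ := by linarith
  have hlogκ : 1 ≤ Real.log κ := by
    calc (1:ℝ) = Real.log (Real.exp 1) := (Real.log_exp 1).symm
      _ ≤ Real.log κ := Real.log_le_log (Real.exp_pos 1) hκ
  have hΔ : (0:ℝ) ≤ t - t' := by linarith
  -- pointwise bound
  have hbd : ∀ b ∈ Finset.Icc 1 ⌊κ⌋₊,
      |∑ a ∈ Finset.Icc 1 ⌊t / (b:ℝ)⌋₊,
          (if t' / (b:ℝ) < (a:ℝ) ∧ t / κ < (a:ℝ) then Λ a else 0)|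
        ≤ (t - t') * ((b:ℝ))⁻¹ + (2 * K₀ * Real.sqrt t * (Real.log t) ^ 2) * (Real.sqrt b)⁻¹ := by
    intro b hb
    rw [Finset.mem_Icc] at hb
    have hbκ : (b:ℝ) ≤ κ := by
      have h2 : (b:ℝ) ≤ (⌊κ⌋₊:ℝ) := by exact_mod_cast hb.2
      exact h2.trans (Nat.floor_le (by linarith))
    have := inner_bound K₀ t t' κ hK₀ hyp' ht' htt hκ hκt b hb.1 hbκ
    calc _ ≤ (t - t') / b + 2 * K₀ * (Real.sqrt t / Real.sqrt b) * (Real.log t) ^ 2 := this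
      _ = (t - t') * ((b:ℝ))⁻¹ + (2 * K₀ * Real.sqrt t * (Real.log t) ^ 2) * (Real.sqrt b)⁻¹ := by
          ring
  calc |∑ b ∈ Finset.Icc 1 ⌊κ⌋₊, ∑ a ∈ Finset.Icc 1 ⌊t / (b : ℝ)⌋₊,
          (if t' / (b : ℝ) < (a : ℝ) ∧ t / κ < (a : ℝ) then Λ a else 0)|
      ≤ ∑ b ∈ Finset.Icc 1 ⌊κ⌋₊, |∑ a ∈ Finset.Icc 1 ⌊t / (b : ℝ)⌋₊,
          (if t' / (b : ℝ) < (a : ℝ) ∧ t / κ < (a : ℝ) then Λ a else 0)| :=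
        Finset.abs_sum_le_sum_abs _ _
    _ ≤ ∑ b ∈ Finset.Icc 1 ⌊κ⌋₊, ((t - t') * ((b:ℝ))⁻¹
          + (2 * K₀ * Real.sqrt t * (Real.log t) ^ 2) * (Real.sqrt b)⁻¹) :=
        Finset.sum_le_sum hbd
    _ = (t - t') * (∑ b ∈ Finset.Icc 1 ⌊κ⌋₊, ((b:ℝ))⁻¹)
          + (2 * K₀ * Real.sqrt t * (Real.log t) ^ 2) * (∑ b ∈ Finset.Icc 1 ⌊κ⌋₊, (Real.sqrt b)⁻¹) := by
        rw [Finset.sum_add_distrib, Finset.mul_sum, Finset.mul_sum]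
    _ ≤ (t - t') * (1 + Real.log κ)
          + (2 * K₀ * Real.sqrt t * (Real.log t) ^ 2) * (2 * Real.sqrt κ) := by
        have s1 : ∑ b ∈ Finset.Icc 1 ⌊κ⌋₊, ((b:ℝ))⁻¹ ≤ 1 + Real.log κ :=
          sum_inv_le ⌊κ⌋₊ κ hκ1 (Nat.floor_le (by linarith))
        have s2 : ∑ b ∈ Finset.Icc 1 ⌊κ⌋₊, (Real.sqrt (b:ℕ))⁻¹ ≤ 2 * Real.sqrt κ := by
          refine (sum_inv_sqrt_le ⌊κ⌋₊).trans ?_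
          have : Real.sqrt (⌊κ⌋₊:ℝ) ≤ Real.sqrt κ :=
            Real.sqrt_le_sqrt (Nat.floor_le (by linarith))
          linarith
        have c1 : (0:ℝ) ≤ 2 * K₀ * Real.sqrt t * (Real.log t) ^ 2 := by positivity
        exact add_le_add (mul_le_mul_of_nonneg_left s1 hΔ) (mul_le_mul_of_nonneg_left s2 c1)
    _ ≤ 4 * K₀ * ((t - t') * Real.log κ + Real.sqrt (t * κ) * (Real.log t) ^ 2) := by
        rw [Real.sqrt_mul ht0.le]
        have hE : 0 ≤ Real.sqrt t * Real.sqrt κ * (Real.log t) ^ 2 := by positivity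
        nlinarith [mul_nonneg hΔ (by linarith : (0:ℝ) ≤ Real.log κ - 1),
          mul_nonneg (by linarith : (0:ℝ) ≤ K₀ - 1) hE,
          mul_nonneg hΔ (by linarith : (0:ℝ) ≤ Real.log κ)]
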